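/- Let p be a prime, let n > 1, and let ā₁, …, āₙ ∈ ℤ/pℤ. Then there exists an integer k with 1 ≤ k ≤ p−1 such that |k·āᵢ|_p ≤ ⌈p^((n−1)/n)⌉ for every 1 ≤ i ≤ n. -/

import Mathlib

theorem small_multiple_exists (p n : ℕ) (hp : p.Prime) (hn : 1 < n)
    (a : Fin n → ZMod p) :
    ∃ k : ℕ, 1 ≤ k ∧ k ≤ p - 1 ∧ ∀ i : Fin n,
      ((min (((k : ZMod p) * a i).val) (p - ((k : ZMod p) * a i).val) : ℕ) : ℤ) ≤
        ⌈(p : ℝ) ^ (((n : ℝ) - 1) / n)⌉ := by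
  have hp2 : 2 ≤ p := hp.two_le
  haveI : Fact p.Prime := ⟨hp⟩
  haveI : NeZero p := ⟨by omega⟩
  set L : ℤ := ⌈(p : ℝ) ^ (((n : ℝ) - 1) / n)⌉ with hLdef
  have hppos : (0:ℝ) < (p:ℝ) := by positivity
  have hL1 : 1 ≤ L := by
    have h1 : (1:ℝ) ≤ (p : ℝ) ^ (((n : ℝ) - 1) / n) := by
      apply Real.one_le_rpow (by exact_mod_cast hp.one_lt.le)
      apply div_nonneg _ (by positivity)
      have : (1:ℝ) ≤ (n:ℝ) := by exact_mod_cast hn.le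
      linarith
    calc (1:ℤ) = ⌈(1:ℝ)⌉ := by simp
    _ ≤ L := Int.ceil_le_ceil h1
  set M : ℕ := L.toNat with hMdef
  have hML : (M : ℤ) = L := Int.toNat_of_nonneg (by omega)
  have hM1 : 1 ≤ M := by omega
  -- key numeric inequality : p ^ (n-1) < M ^ n
  have hkey : p ^ (n - 1) < M ^ n := by
    have hle : (p:ℝ) ^ ((n:ℕ) - 1 : ℕ) ≤ (M:ℝ) ^ n := by
      have hMr : (p : ℝ) ^ (((n : ℝ) - 1) / n) ≤ (M:ℝ) := by
        have := Int.le_ceil ((p : ℝ) ^ (((n : ℝ) - 1) / n))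
        rw [← hLdef] at this
        calc (p : ℝ) ^ (((n : ℝ) - 1) / n) ≤ (L : ℝ) := this
        _ = (M : ℝ) := by exact_mod_cast congrArg (Int.cast : ℤ → ℝ) hML.symm
      have h2 : ((p : ℝ) ^ (((n : ℝ) - 1) / n)) ^ (n:ℕ) ≤ (M:ℝ) ^ n :=
        pow_le_pow_left₀ (Real.rpow_nonneg hppos.le _) hMr n
      have h3 : ((p : ℝ) ^ (((n : ℝ) - 1) / n)) ^ (n:ℕ) = (p:ℝ) ^ ((n:ℕ) - 1 : ℕ) := by
        rw [← Real.rpow_natCast ((p : ℝ) ^ (((n : ℝ) - 1) / n)) n, ← Real.rpow_mul hppos.le]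
        have hn0 : (n:ℝ) ≠ 0 := by positivity
        have : ((n : ℝ) - 1) / n * n = ((n:ℕ) - 1 : ℕ) := by
          rw [div_mul_cancel₀ _ hn0]
          push_cast [Nat.cast_sub (by omega : 1 ≤ n)]
          ring
        rw [this, Real.rpow_natCast]
      rw [← h3]; exact h2
    have hle' : p ^ (n - 1) ≤ M ^ n := by exact_mod_cast hle
    rcases lt_or_eq_of_le hle' with h | h
    · exact h
    · exfalso
      have hd : p ∣ M ^ n := by
        rw [← h]
        exact dvd_pow_self p (by omega)
      have hdM : p ∣ M := hp.dvd_of_dvd_pow hd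
      have : p ^ n ∣ M ^ n := pow_dvd_pow_of_dvd hdM n
      rw [← h] at this
      have := Nat.le_of_dvd (by positivity) this
      have := Nat.pow_lt_pow_right hp.one_lt (show n - 1 < n by omega)
      omega
  -- trivial case helper
  by_cases hA : ((p / 2 : ℕ) : ℤ) ≤ L
  · -- k = 1 works
    refine ⟨1, le_refl _, by omega, fun i => ?_⟩
    set v := (((1:ℕ) : ZMod p) * a i).val with hv
    have hvlt : v < p := ZMod.val_lt _
    have : min v (p - v) ≤ p / 2 := by omega
    calc ((min v (p - v) : ℕ) : ℤ) ≤ ((p / 2 : ℕ) : ℤ) := by exact_mod_cast this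
    _ ≤ L := hA
  · push_neg at hA
    have hMp : M < p := by omega
    -- nonzero coordinate
    by_cases ha : ∀ i, a i = 0
    · refine ⟨1, le_refl _, by omega, fun i => ?_⟩
      simp [ha i]
      omega
    · push_neg at ha
      obtain ⟨i₀, hi₀⟩ := ha
      -- pigeonhole
      set F : (Fin n → Fin M) → ({i : Fin n // i ≠ i₀} → ZMod p) :=
        fun x j => ((x j.1 : ℕ) : ZMod p) - ((x i₀ : ℕ) : ZMod p) * (a i₀)⁻¹ * a j.1 with hF
      have hcard : Fintype.card ({i : Fin n // i ≠ i₀} → ZMod p) <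
          Fintype.card (Fin n → Fin M) := by
        rw [Fintype.card_fun, Fintype.card_fun, ZMod.card, Fintype.card_fin, Fintype.card_fin]
        have : Fintype.card {i : Fin n // i ≠ i₀} = n - 1 := by
          simp [Fintype.card_subtype_compl, Fintype.card_fin]
        rw [this]
        exact hkey
      obtain ⟨x, y, hxy, hFxy⟩ := Fintype.exists_ne_map_eq_of_card_lt F hcard
      set k' : ZMod p := (((x i₀ : ℕ) : ZMod p) - ((y i₀ : ℕ) : ZMod p)) * (a i₀)⁻¹ with hk'
      have hrel : ∀ i, ((x i : ℕ) : ZMod p) - ((y i : ℕ) : ZMod p) = k' * a i := by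
        intro i
        by_cases hi : i = i₀
        · subst hi
          rw [hk', mul_assoc, inv_mul_cancel₀ hi₀, mul_one]
        · have := congrFun hFxy ⟨i, hi⟩
          simp only [hF] at this
          rw [hk']
          linear_combination this
      have hk'0 : k' ≠ 0 := by
        intro h0
        apply hxy
        funext i
        have := hrel i
        rw [h0, zero_mul, sub_eq_zero] at this
        have hxi : ((x i : ℕ) : ZMod p).val = (x i : ℕ) :=
          ZMod.val_cast_of_lt (lt_trans (x i).2 hMp)
        have hyi : ((y i : ℕ) : ZMod p).val = (y i : ℕ) :=
          ZMod.val_cast_of_lt (lt_trans (y i).2 hMp)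
        have : (x i : ℕ) = (y i : ℕ) := by rw [← hxi, ← hyi, this]
        exact Fin.ext this
      refine ⟨k'.val, ?_, ?_, ?_⟩
      · have := (ZMod.val_eq_zero k').not.mpr hk'0
        omega
      · have := k'.val_lt
        omega
      · intro i
        have hcast : ((k'.val : ℕ) : ZMod p) = k' := ZMod.natCast_rightInverse k'
        rw [hcast]
        have hz := (hrel i).symm
        set z := k' * a i with hzdef
        have hxM : (x i : ℕ) < M := (x i).2
        have hyM : (y i : ℕ) < M := (y i).2
        rcases le_or_gt (y i : ℕ) (x i : ℕ) with hle | hlt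
        · -- z = (x i - y i : ℕ)
          have hd : ((((x i : ℕ) - (y i : ℕ) : ℕ)) : ZMod p) = z := by
            rw [hz]
            push_cast [Nat.cast_sub hle]
            ring
          have hdlt : (x i : ℕ) - (y i : ℕ) < p := by omega
          have hval : z.val = (x i : ℕ) - (y i : ℕ) := by
            rw [← hd, ZMod.val_cast_of_lt hdlt]
          have : min z.val (p - z.val) ≤ M := by omega
          calc ((min z.val (p - z.val) : ℕ) : ℤ) ≤ (M : ℤ) := by exact_mod_cast this
          _ = L := hML
        · -- z = -(y i - x i : ℕ)
          set d : ℕ := (y i : ℕ) - (x i : ℕ) with hddef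
          have hd0 : 0 < d := by omega
          have hdlt : d < p := by omega
          have hdz : ((d : ℕ) : ZMod p) = -z := by
            rw [hz, hddef]
            push_cast [Nat.cast_sub hlt.le]
            ring
          have hdval : ((d : ℕ) : ZMod p).val = d := ZMod.val_cast_of_lt hdlt
          have hdne : ((d : ℕ) : ZMod p) ≠ 0 := by
            intro h
            rw [h, ZMod.val_zero] at hdval
            omega
          have hzne : z ≠ 0 := by
            intro h
            rw [h, neg_zero] at hdz
            exact hdne hdz
          have hval : z.val = p - d := by
            have : (-z).val = p - z.val := by
              rw [ZMod.neg_val, if_neg hzne]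
            rw [hdz, this] at hdval
            have := z.val_lt
            omega
          have : min z.val (p - z.val) ≤ M := by omega
          calc ((min z.val (p - z.val) : ℕ) : ℤ) ≤ (M : ℤ) := by exact_mod_cast this
          _ = L := hML
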